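/- Lipschitz continuity of the effective Hamiltonian: Let H : ℝ^N × ℝ^N → ℝ be continuous, ℤ^N-periodic in its first variable, and coercive, and let H̄(P) denote the effective Hamiltonian, i.e., the unique critical value of the cell problem H(x, Du + P) = a on T^N. If there exists L > 0 such that |H(x, p) − H(x, q)| ≤ L|p − q| for all x, p, q ∈ ℝ^N, then |H̄(P) − H̄(Q)| ≤ L|P − Q| for all P, Q ∈ ℝ^N. -/

import Mathlib

open Set Filter MeasureTheory

noncomputable section

abbrev Euc (N : ℕ) := EuclideanSpace ℝ (Fin N)

def intVec {N : ℕ} (z : Fin N → ℤ) : Euc N :=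
  (EuclideanSpace.equiv (Fin N) ℝ).symm (fun i => (z i : ℝ))

def IsZPeriodic {N : ℕ} (u : Euc N → ℝ) : Prop :=
  ∀ (x : Euc N) (z : Fin N → ℤ), u (x + intVec z) = u x

def IsZPeriodicH {N : ℕ} (H : Euc N → Euc N → ℝ) : Prop :=
  ∀ (x p : Euc N) (z : Fin N → ℤ), H (x + intVec z) p = H x p

def superDiff {N : ℕ} (u : Euc N → ℝ) (x : Euc N) : Set (Euc N) :=
  { q | ∃ φ : Euc N → ℝ, ContDiff ℝ 1 φ ∧ IsZPeriodic φ ∧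
        (∀ y, u y - φ y ≤ u x - φ x) ∧ q = gradient φ x }

def subDiff {N : ℕ} (u : Euc N → ℝ) (x : Euc N) : Set (Euc N) :=
  { q | ∃ φ : Euc N → ℝ, ContDiff ℝ 1 φ ∧ IsZPeriodic φ ∧
        (∀ y, u x - φ x ≤ u y - φ y) ∧ q = gradient φ x }

def IsCellSubsolution {N : ℕ} (H : Euc N → Euc N → ℝ) (P : Euc N) (a : ℝ) (u : Euc N → ℝ) : Prop :=
  ∀ x, ∀ q ∈ superDiff u x, H x (q + P) ≤ a

def IsCellSupersolution {N : ℕ} (H : Euc N → Euc N → ℝ) (P : Euc N) (a : ℝ) (u : Euc N → ℝ) : Prop :=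
  ∀ x, ∀ q ∈ subDiff u x, a ≤ H x (q + P)

def IsCellSolution {N : ℕ} (H : Euc N → Euc N → ℝ) (P : Euc N) (u : Euc N → ℝ) (a : ℝ) : Prop :=
  (∃ K : NNReal, LipschitzWith K u) ∧ IsZPeriodic u ∧
    IsCellSubsolution H P a u ∧ IsCellSupersolution H P a u

def IsCoerciveH {N : ℕ} (H : Euc N → Euc N → ℝ) : Prop :=
  ∀ C : ℝ, ∃ r : ℝ, ∀ x p : Euc N, r ≤ ‖p‖ → C ≤ H x p

section Aux
open Real

lemma intVec_apply {N : ℕ} (z : Fin N → ℤ) (i : Fin N) : intVec z i = (z i : ℝ) := rfl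

def phi {N : ℕ} (w : Euc N) : ℝ := ∑ i, (Real.sin (π * w i))^2 / π^2

def gradPhi {N : ℕ} (w : Euc N) : Euc N :=
  (EuclideanSpace.equiv (Fin N) ℝ).symm (fun i => Real.sin (2*(π * w i))/π)

lemma gradPhi_apply {N : ℕ} (w : Euc N) (i : Fin N) :
    gradPhi w i = Real.sin (2*(π * w i))/π := rfl

lemma phi_nonneg {N : ℕ} (w : Euc N) : 0 ≤ phi w := by
  apply Finset.sum_nonneg; intro i _; positivity

lemma phi_zero {N : ℕ} : phi (0 : Euc N) = 0 := by
  simp [phi]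

lemma sin_sq_add_int (t : ℝ) (z : ℤ) : Real.sin (π * (t + z))^2 = Real.sin (π * t)^2 := by
  have : π * (t + z) = π * t + z * π := by ring
  rw [this, Real.sin_add_int_mul_pi, mul_pow]
  rcases Int.even_or_odd z with h | h
  · rw [h.neg_one_zpow]; ring
  · rw [h.neg_one_zpow]; ring

lemma phi_periodic {N : ℕ} (w : Euc N) (z : Fin N → ℤ) : phi (w + intVec z) = phi w := by
  unfold phi
  apply Finset.sum_congr rfl
  intro i _
  have : (w + intVec z) i = w i + (z i : ℝ) := rfl
  rw [this, sin_sq_add_int]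

lemma hasDerivAt_term (t : ℝ) :
    HasDerivAt (fun s => Real.sin (π * s)^2 / π^2) (Real.sin (2*(π*t))/π) t := by
  have h1 : HasDerivAt (fun s : ℝ => π * s) π t := by
    simpa using (hasDerivAt_id t).const_mul π
  have h2 := (Real.hasDerivAt_sin (π * t)).comp t h1
  have h3 := (h2.pow 2).div_const (π^2)
  refine h3.congr_deriv ?_
  simp only [Function.comp_apply]
  rw [Real.sin_two_mul]
  have hπ : (π:ℝ) ≠ 0 := Real.pi_ne_zero
  field_simp
  ring

lemma phi_hasFDerivAt {N : ℕ} (w : Euc N) :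
    HasFDerivAt phi
      (∑ i, (Real.sin (2*(π * w i))/π) • (EuclideanSpace.proj (𝕜 := ℝ) i : Euc N →L[ℝ] ℝ)) w := by
  apply HasFDerivAt.fun_sum
  intro i _
  have hp : HasFDerivAt (fun y : Euc N => y i) (EuclideanSpace.proj (𝕜 := ℝ) i) w :=
    (EuclideanSpace.proj (𝕜 := ℝ) i).hasFDerivAt
  exact (hasDerivAt_term (w i)).comp_hasFDerivAt w hp

lemma phi_hasGradientAt {N : ℕ} (w : Euc N) : HasGradientAt phi (gradPhi w) w := by
  rw [hasGradientAt_iff_hasFDerivAt]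
  refine (phi_hasFDerivAt w).congr_fderiv ?_
  apply ContinuousLinearMap.ext; intro v
  simp [InnerProductSpace.toDual_apply_apply, PiLp.inner_apply, gradPhi_apply,
    RCLike.inner_apply, PiLp.proj_apply]
  exact Finset.sum_congr rfl fun i _ => mul_comm _ _

lemma phi_contDiff {N : ℕ} : ContDiff ℝ 1 (phi (N := N)) := by
  apply ContDiff.sum
  intro i _
  apply ContDiff.div_const
  apply ContDiff.pow
  exact Real.contDiff_sin.of_le le_top |>.comp (contDiff_const.mul ((EuclideanSpace.proj (𝕜 := ℝ) i).contDiff))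

lemma testX_hasGradientAt {N : ℕ} (K : ℝ) (y₀ x : Euc N) :
    HasGradientAt (fun x => K * phi (x - y₀)) (K • gradPhi (x - y₀)) x := by
  have h1 : HasFDerivAt phi
      ((InnerProductSpace.toDual ℝ (Euc N)) (gradPhi (x - y₀))) (x - y₀) :=
    (phi_hasGradientAt (x - y₀)).hasFDerivAt
  have h2 : HasFDerivAt (fun z : Euc N => z - y₀) (ContinuousLinearMap.id ℝ (Euc N)) x :=
    (hasFDerivAt_id x).sub_const y₀
  have h3 := (h1.comp x h2).const_mul K
  rw [hasGradientAt_iff_hasFDerivAt]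
  refine h3.congr_fderiv ?_
  simp [_root_.map_smul]

lemma testY_hasGradientAt {N : ℕ} (K : ℝ) (x₀ y : Euc N) :
    HasGradientAt (fun y => -(K * phi (x₀ - y))) (K • gradPhi (x₀ - y)) y := by
  have h1 : HasFDerivAt phi
      ((InnerProductSpace.toDual ℝ (Euc N)) (gradPhi (x₀ - y))) (x₀ - y) :=
    (phi_hasGradientAt (x₀ - y)).hasFDerivAt
  have h2 : HasFDerivAt (fun z : Euc N => x₀ - z) (-(ContinuousLinearMap.id ℝ (Euc N))) y :=
    (hasFDerivAt_id y).const_sub x₀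
  have h3 := ((h1.comp y h2).const_mul K).neg
  rw [hasGradientAt_iff_hasFDerivAt]
  refine h3.congr_fderiv ?_
  apply ContinuousLinearMap.ext; intro v
  simp [_root_.map_smul, real_inner_smul_left]

lemma intVec_neg {N : ℕ} (z : Fin N → ℤ) : intVec (-z) = -(intVec z) := by
  ext i
  simp [intVec_apply]

lemma testX_periodic {N : ℕ} (K : ℝ) (y₀ : Euc N) :
    IsZPeriodic (fun x => K * phi (x - y₀)) := by
  intro x z
  have h : x + intVec z - y₀ = (x - y₀) + intVec z := by abel
  simp only []
  rw [h, phi_periodic]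

lemma testY_periodic {N : ℕ} (K : ℝ) (x₀ : Euc N) :
    IsZPeriodic (fun y => -(K * phi (x₀ - y))) := by
  intro y z
  have h : x₀ - (y + intVec z) = (x₀ - y) + intVec (-z) := by
    rw [intVec_neg]; abel
  simp only []
  rw [h, phi_periodic]

lemma testX_contDiff {N : ℕ} (K : ℝ) (y₀ : Euc N) :
    ContDiff ℝ 1 (fun x : Euc N => K * phi (x - y₀)) :=
  contDiff_const.mul (phi_contDiff.comp (contDiff_id.sub contDiff_const))

lemma testY_contDiff {N : ℕ} (K : ℝ) (x₀ : Euc N) :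
    ContDiff ℝ 1 (fun y : Euc N => -(K * phi (x₀ - y))) :=
  (contDiff_const.mul (phi_contDiff.comp (contDiff_const.sub contDiff_id))).neg

lemma intVec_sub {N : ℕ} (z w : Fin N → ℤ) : intVec (z - w) = intVec z - intVec w := by
  ext i
  simp [intVec_apply]

def cube (N : ℕ) : Set (Euc N) := {x | ∀ i, x i ∈ Icc (0:ℝ) 1}

lemma norm_sq_eq {N : ℕ} (x : Euc N) : ‖x‖^2 = ∑ i, (x i)^2 := by
  rw [EuclideanSpace.norm_eq, Real.sq_sqrt]
  · simp [Real.norm_eq_abs, sq_abs]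
  · positivity

lemma norm_le_sqrt_of_coords {N : ℕ} {x : Euc N} {r : ℝ} (hr : 0 ≤ r)
    (h : ∀ i, |x i| ≤ r) : ‖x‖ ≤ Real.sqrt N * r := by
  have h2 : ‖x‖^2 ≤ N * r^2 := by
    rw [norm_sq_eq]
    calc ∑ i, (x i)^2 ≤ ∑ _i : Fin N, r^2 := by
          apply Finset.sum_le_sum
          intro i _
          rw [← sq_abs]
          exact pow_le_pow_left₀ (abs_nonneg _) (h i) 2
      _ = N * r^2 := by simp [mul_comm]
  have := Real.sqrt_le_sqrt h2
  rw [Real.sqrt_sq (norm_nonneg x)] at this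
  calc ‖x‖ ≤ Real.sqrt ((N : ℝ) * r^2) := this
    _ = Real.sqrt N * r := by
        rw [Real.sqrt_mul (by positivity), Real.sqrt_sq hr]

lemma cube_norm_le {N : ℕ} {x : Euc N} (hx : x ∈ cube N) : ‖x‖ ≤ Real.sqrt N := by
  have := norm_le_sqrt_of_coords (r := 1) zero_le_one (fun i => by
    have := hx i
    rw [abs_le]
    constructor <;> linarith [(hx i).1, (hx i).2])
  simpa using this

lemma cube_compact {N : ℕ} : IsCompact (cube N) := by
  apply IsCompact.of_isClosed_subset (isCompact_closedBall (0 : Euc N) (Real.sqrt N))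
  · have : cube N = ⋂ i, (fun x : Euc N => x i) ⁻¹' Icc (0:ℝ) 1 := by
      ext x; simp [cube, Set.mem_iInter]
    rw [this]
    exact isClosed_iInter fun i => isClosed_Icc.preimage (EuclideanSpace.proj (𝕜 := ℝ) i).continuous
  · intro x hx
    simpa [Metric.mem_closedBall, dist_eq_norm] using cube_norm_le hx

lemma exists_reduce {N : ℕ} (x : Euc N) : ∃ z : Fin N → ℤ, (x + intVec z) ∈ cube N := by
  refine ⟨fun i => -⌊x i⌋, fun i => ?_⟩
  have hi : (x + intVec (fun i => -⌊x i⌋)) i = x i - ⌊x i⌋ := by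
    show x i + ((-⌊x i⌋ : ℤ) : ℝ) = x i - ⌊x i⌋
    push_cast; ring
  rw [hi]
  constructor
  · linarith [Int.floor_le (x i)]
  · linarith [Int.lt_floor_add_one (x i)]

lemma phi_cont {N : ℕ} : Continuous (phi (N := N)) := phi_contDiff.continuous

lemma exists_maxpair {N : ℕ} (u v : Euc N → ℝ) (hu : Continuous u) (hv : Continuous v)
    (hup : IsZPeriodic u) (hvp : IsZPeriodic v) (K : ℝ) :
    ∃ x₀ y₀ : Euc N, x₀ ∈ cube N ∧ (∀ i, |x₀ i - y₀ i| ≤ 1/2) ∧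
      ∀ x y, u x - v y - K * phi (x - y) ≤ u x₀ - v y₀ - K * phi (x₀ - y₀) := by
  set F : Euc N × Euc N → ℝ := fun q => u q.1 - v q.2 - K * phi (q.1 - q.2) with hF
  have hFc : Continuous F := by
    apply Continuous.sub
    · exact (hu.comp continuous_fst).sub (hv.comp continuous_snd)
    · exact continuous_const.mul (phi_cont.comp (continuous_fst.sub continuous_snd))
  have hFper : ∀ (x y : Euc N) (zx zy : Fin N → ℤ),
      F (x + intVec zx, y + intVec zy) = F (x, y) := by
    intro x y zx zy
    have h1 : (x + intVec zx) - (y + intVec zy) = (x - y) + intVec (zx - zy) := by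
      rw [intVec_sub]; abel
    simp only [hF]
    rw [hup, hvp, h1, phi_periodic]
  obtain ⟨q₀, hq₀S, hq₀⟩ := (cube_compact.prod cube_compact).exists_isMaxOn
    (⟨(0, 0), fun i => by simp, fun i => by simp⟩ : ((cube N) ×ˢ (cube N)).Nonempty)
    (hFc.continuousOn)
  obtain ⟨x₀, y₀'⟩ := q₀
  have hglobal : ∀ x y, F (x, y) ≤ F (x₀, y₀') := by
    intro x y
    obtain ⟨zx, hzx⟩ := exists_reduce x
    obtain ⟨zy, hzy⟩ := exists_reduce y
    have h2 : F (x + intVec zx, y + intVec zy) ≤ F (x₀, y₀') :=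
      hq₀ (Set.mk_mem_prod hzx hzy)
    rw [hFper x y zx zy] at h2
    exact h2
  -- recenter y₀'
  set z : Fin N → ℤ := fun i => ⌊x₀ i - y₀' i + 1/2⌋ with hz
  set y₀ : Euc N := y₀' + intVec z with hy₀
  have hx0 : x₀ + intVec (0 : Fin N → ℤ) = x₀ := by
    ext i; simp [intVec_apply]
  have hFy : F (x₀, y₀) = F (x₀, y₀') := by
    calc F (x₀, y₀) = F (x₀ + intVec 0, y₀' + intVec z) := by rw [hx0]
      _ = F (x₀, y₀') := hFper x₀ y₀' 0 z
  refine ⟨x₀, y₀, hq₀S.1, ?_, ?_⟩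
  · intro i
    have hyi : y₀ i = y₀' i + (z i : ℝ) := rfl
    rw [hyi, hz]
    rw [abs_le]
    constructor
    · have := Int.floor_le (x₀ i - y₀' i + 1/2)
      push_cast
      linarith
    · have := Int.lt_floor_add_one (x₀ i - y₀' i + 1/2)
      push_cast
      linarith
  · intro x y
    have := hglobal x y
    rw [← hFy] at this
    exact this

lemma four_sq_le_sin_sq {t : ℝ} (ht : |t| ≤ 1/2) : 4 * t^2 ≤ Real.sin (π * t)^2 := by
  have h1 : 2 * |t| ≤ Real.sin (π * |t|) := by
    have hle : π * |t| ≤ π / 2 := by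
      have := mul_le_mul_of_nonneg_left ht (le_of_lt Real.pi_pos)
      linarith
    have := Real.mul_le_sin (x := π * |t|) (by positivity) hle
    have heq : 2 / π * (π * |t|) = 2 * |t| := by
      field_simp
    linarith [heq ▸ this]
  have h2 : Real.sin (π * |t|)^2 = Real.sin (π * t)^2 := by
    rcases abs_cases t with ⟨h, _⟩ | ⟨h, _⟩
    · rw [h]
    · rw [h]
      have : π * -t = -(π * t) := by ring
      rw [this, Real.sin_neg, neg_sq]
  have h3 : (2 * |t|)^2 ≤ Real.sin (π * |t|)^2 :=
    pow_le_pow_left₀ (by positivity) h1 2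
  rw [h2] at h3
  calc 4 * t^2 = (2 * |t|)^2 := by rw [mul_pow, sq_abs]; ring
    _ ≤ _ := h3

lemma sin_two_sq_le (t : ℝ) : (Real.sin (2*(π*t))/π)^2 ≤ 4 * t^2 := by
  have h1 : Real.sin (2*(π*t))^2 ≤ (2*(π*t))^2 := Real.sin_sq_le_sq
  have hπ : (0:ℝ) < π^2 := by positivity
  rw [div_pow]
  rw [div_le_iff₀ hπ]
  calc Real.sin (2*(π*t))^2 ≤ (2*(π*t))^2 := h1
    _ = 4 * t^2 * π^2 := by ring

lemma phi_lb {N : ℕ} {w : Euc N} (h : ∀ i, |w i| ≤ 1/2) : 4/π^2 * ‖w‖^2 ≤ phi w := by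
  rw [norm_sq_eq, Finset.mul_sum]
  apply Finset.sum_le_sum
  intro i _
  rw [div_mul_eq_mul_div, div_le_div_iff₀ (by positivity) (by positivity)]
  have := four_sq_le_sin_sq (h i)
  nlinarith [sq_nonneg π, Real.pi_pos]

lemma gradPhi_norm_le {N : ℕ} (w : Euc N) : ‖gradPhi w‖ ≤ 2 * ‖w‖ := by
  have h2 : ‖gradPhi w‖^2 ≤ (2 * ‖w‖)^2 := by
    rw [norm_sq_eq]
    calc ∑ i, (gradPhi w i)^2 ≤ ∑ i, 4 * (w i)^2 := by
          apply Finset.sum_le_sum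
          intro i _
          exact sin_two_sq_le (w i)
      _ = 4 * ‖w‖^2 := by rw [norm_sq_eq, Finset.mul_sum]
      _ = (2 * ‖w‖)^2 := by ring
  have := Real.sqrt_le_sqrt h2
  rwa [Real.sqrt_sq (norm_nonneg _), Real.sqrt_sq (by positivity)] at this

lemma key {N : ℕ} (H : Euc N → Euc N → ℝ)
    (hHc : Continuous fun q : Euc N × Euc N => H q.1 q.2)
    (L : ℝ) (hHLip : ∀ (x p q : Euc N), |H x p - H x q| ≤ L * ‖p - q‖)
    (P Q : Euc N) (u v : Euc N → ℝ) (c d : ℝ)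
    (Ku : NNReal) (hKu : LipschitzWith Ku u) (hup : IsZPeriodic u)
    (hsub : IsCellSubsolution H P c u)
    (Kv : NNReal) (hKv : LipschitzWith Kv v) (hvp : IsZPeriodic v)
    (hsup : IsCellSupersolution H Q d v) :
    d ≤ c + L * ‖P - Q‖ := by
  apply le_of_forall_pos_le_add
  intro ε hε
  set M : ℝ := π^2 * Ku / 2 with hM
  set R₁ : ℝ := 2 * Real.sqrt N + 1 with hR₁
  set R₂ : ℝ := M + ‖Q‖ + 1 with hR₂
  set T : Set (Euc N × Euc N) := Metric.closedBall 0 R₁ ×ˢ Metric.closedBall 0 R₂ with hT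
  have hTcomp : IsCompact T := (isCompact_closedBall _ _).prod (isCompact_closedBall _ _)
  have hUC := hTcomp.uniformContinuousOn_of_continuous hHc.continuousOn
  rw [Metric.uniformContinuousOn_iff] at hUC
  obtain ⟨δ, hδpos, hδ⟩ := hUC ε hε
  set K : ℝ := π^2 * Ku / (4*δ) + 1 with hK
  have hKpos : 0 < K := by positivity
  have hKsmall : π^2 * (Ku:ℝ) / (4*K) < δ := by
    rw [div_lt_iff₀ (by positivity)]
    have h1 : π^2 * (Ku:ℝ) / (4*δ) * (4*δ) = π^2 * (Ku:ℝ) := by field_simp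
    have h2 : π^2 * (Ku:ℝ) / (4*δ) < K := by rw [hK]; linarith
    calc π^2*(Ku:ℝ) = (π^2*(Ku:ℝ)/(4*δ)) * (4*δ) := h1.symm
      _ < K * (4*δ) := by
          apply mul_lt_mul_of_pos_right h2 (by positivity)
      _ = δ * (4*K) := by ring
  clear_value K
  obtain ⟨x₀, y₀, hx₀cube, hcoord, hmax⟩ :=
    exists_maxpair u v hKu.continuous hKv.continuous hup hvp K
  set w₀ : Euc N := x₀ - y₀ with hw₀
  set p : Euc N := K • gradPhi w₀ with hp
  have hHx : H x₀ (p + P) ≤ c := by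
    apply hsub x₀
    refine ⟨fun x => K * phi (x - y₀), testX_contDiff K y₀, testX_periodic K y₀, ?_, ?_⟩
    · intro x1
      have := hmax x1 y₀
      simp only []
      linarith
    · rw [hp, hw₀]
      exact ((testX_hasGradientAt K y₀ x₀).gradient).symm
  have hHy : d ≤ H y₀ (p + Q) := by
    apply hsup y₀
    refine ⟨fun y => -(K * phi (x₀ - y)), testY_contDiff K x₀, testY_periodic K x₀, ?_, ?_⟩
    · intro y1
      have := hmax x₀ y1
      simp only []
      linarith
    · rw [hp, hw₀]
      exact ((testY_hasGradientAt K x₀ y₀).gradient).symm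
  have hphiKw : K * phi w₀ ≤ (Ku:ℝ) * ‖w₀‖ := by
    have h1 : u y₀ - v y₀ - K * phi (y₀ - y₀) ≤ u x₀ - v y₀ - K * phi (x₀ - y₀) := hmax y₀ y₀
    rw [sub_self, phi_zero] at h1
    have h2 : u x₀ - u y₀ ≤ (Ku:ℝ) * ‖x₀ - y₀‖ := by
      have h3 := hKu.dist_le_mul x₀ y₀
      rw [Real.dist_eq, dist_eq_norm] at h3
      calc u x₀ - u y₀ ≤ |u x₀ - u y₀| := le_abs_self _
        _ ≤ (Ku:ℝ) * ‖x₀ - y₀‖ := h3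
    rw [← hw₀] at h1 h2
    linarith
  have hphilb : 4/π^2 * ‖w₀‖^2 ≤ phi w₀ := phi_lb (fun i => hcoord i)
  have hwnorm : ‖w₀‖ ≤ π^2 * (Ku:ℝ) / (4*K) := by
    rcases eq_or_lt_of_le (norm_nonneg w₀) with h0 | h0
    · rw [← h0]; positivity
    · have h1 := mul_le_mul_of_nonneg_left hphilb (le_of_lt hKpos)
      have hcomb : K * (4/π^2) * ‖w₀‖ * ‖w₀‖ ≤ (Ku:ℝ) * ‖w₀‖ := by nlinarith
      have h3 : K * (4/π^2) * ‖w₀‖ ≤ (Ku:ℝ) := le_of_mul_le_mul_right hcomb h0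
      rw [le_div_iff₀ (by positivity : (0:ℝ) < 4*K)]
      have h4 := mul_le_mul_of_nonneg_right h3 (sq_nonneg π)
      have h5 : K*(4/π^2)*‖w₀‖*π^2 = ‖w₀‖ * (4*K) := by field_simp
      linarith
  have hpnorm : ‖p‖ ≤ M := by
    have h1 : ‖p‖ = K * ‖gradPhi w₀‖ := by
      rw [hp, norm_smul, Real.norm_eq_abs, abs_of_pos hKpos]
    have h2 := gradPhi_norm_le w₀
    calc ‖p‖ = K * ‖gradPhi w₀‖ := h1
      _ ≤ K * (2*‖w₀‖) := by
          apply mul_le_mul_of_nonneg_left h2 (le_of_lt hKpos)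
      _ ≤ K * (2 * (π^2 * (Ku:ℝ) / (4*K))) := by
          apply mul_le_mul_of_nonneg_left _ (le_of_lt hKpos)
          linarith
      _ = M := by rw [hM]; field_simp; ring
  have hwN : ‖w₀‖ ≤ Real.sqrt N := by
    have h1 := norm_le_sqrt_of_coords (x := w₀) (r := 1/2) (by norm_num) (fun i => hcoord i)
    have h2 : Real.sqrt N * (1/2) ≤ Real.sqrt N := by
      nlinarith [Real.sqrt_nonneg (N:ℝ)]
    linarith
  have hxball : x₀ ∈ Metric.closedBall (0:Euc N) R₁ := by
    rw [Metric.mem_closedBall, dist_zero_right]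
    have := cube_norm_le hx₀cube
    rw [hR₁]
    linarith [Real.sqrt_nonneg (N:ℝ)]
  have hyball : y₀ ∈ Metric.closedBall (0:Euc N) R₁ := by
    rw [Metric.mem_closedBall, dist_zero_right]
    have h1 : y₀ = x₀ - w₀ := by rw [hw₀]; abel
    have h2 : ‖y₀‖ ≤ ‖x₀‖ + ‖w₀‖ := by
      rw [h1]; exact norm_sub_le _ _
    have := cube_norm_le hx₀cube
    rw [hR₁]
    linarith
  have hpQball : p + Q ∈ Metric.closedBall (0:Euc N) R₂ := by
    rw [Metric.mem_closedBall, dist_zero_right]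
    have := norm_add_le p Q
    rw [hR₂]
    linarith
  have hdist : dist ((y₀, p+Q) : Euc N × Euc N) (x₀, p+Q) < δ := by
    rw [Prod.dist_eq]
    simp only [dist_self]
    rw [max_eq_left dist_nonneg, dist_eq_norm]
    have : ‖y₀ - x₀‖ = ‖w₀‖ := by rw [hw₀, norm_sub_rev]
    rw [this]
    exact lt_of_le_of_lt hwnorm hKsmall
  have hHH := hδ (y₀, p+Q) ⟨hyball, hpQball⟩ (x₀, p+Q) ⟨hxball, hpQball⟩ hdist
  simp only [Real.dist_eq] at hHH
  have hstep1 : H y₀ (p+Q) - H x₀ (p+Q) < ε := (abs_sub_lt_iff.mp hHH).1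
  have hLipx := hHLip x₀ (p+Q) (p+P)
  have hnorm : ‖(p+Q) - (p+P)‖ = ‖P - Q‖ := by
    rw [add_sub_add_left_eq_sub, norm_sub_rev]
  rw [hnorm] at hLipx
  have hstep2 : H x₀ (p+Q) - H x₀ (p+P) ≤ L * ‖P - Q‖ :=
    le_trans (le_abs_self _) hLipx
  linarith

end Aux

/-- Lipschitz continuity of the effective Hamiltonian. -/
theorem effective_hamiltonian_lipschitz {N : ℕ} (hN : 1 ≤ N)
    (H : Euc N → Euc N → ℝ)
    (hHc : Continuous fun q : Euc N × Euc N => H q.1 q.2)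
    (hHp : IsZPeriodicH H)
    (hHcoer : IsCoerciveH H)
    (L : ℝ) (hL : 0 < L)
    (hHLip : ∀ (x p q : Euc N), |H x p - H x q| ≤ L * ‖p - q‖) :
    ∀ (P Q : Euc N) (u v : Euc N → ℝ) (c d : ℝ),
      IsCellSolution H P u c → IsCellSolution H Q v d →
      |c - d| ≤ L * ‖P - Q‖ := by
  intro P Q u v c d hu hv
  obtain ⟨⟨Ku, hKu⟩, hup, husub, husup⟩ := hu
  obtain ⟨⟨Kv, hKv⟩, hvp, hvsub, hvsup⟩ := hv
  have h1 := key H hHc L hHLip P Q u v c d Ku hKu hup husub Kv hKv hvp hvsup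
  have h2 := key H hHc L hHLip Q P v u d c Kv hKv hvp hvsub Ku hKu hup husup
  rw [norm_sub_rev] at h2
  rw [abs_sub_le_iff]
  exact ⟨by linarith, by linarith⟩
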